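/- arXiv:2509.25869 — 5 statements merged into one kernel-verified Lean document; each statement's English description precedes it below -/
import Mathlib

section
/- For every complex number z, if S = {x ∈ ℂ : Re(x) ≥ 1/2} and χ_S denotes the characteristic function of S, then |χ_S(z) − z| ≤ 2|z² − z|. -/
theorem stmt0 (z : ℂ) :
    ‖(if (1/2 : ℝ) ≤ z.re then (1 : ℂ) else 0) - z‖ ≤
      2 * ‖z ^ 2 - z‖ := by
  have hfac : z ^ 2 - z = z * (z - 1) := by ring
  rw [hfac, norm_mul]
  split_ifs with h
  · have h1 : (1/2 : ℝ) ≤ ‖z‖ :=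
      le_trans h (le_trans (le_abs_self z.re) (Complex.abs_re_le_norm z))
    have h2 : ‖(1 : ℂ) - z‖ = ‖z - 1‖ := by
      rw [← norm_neg]; ring_nf
    rw [h2]
    nlinarith [norm_nonneg (z - 1)]
  · push_neg at h
    have h1 : (1/2 : ℝ) ≤ ‖z - 1‖ := by
      have : (1/2 : ℝ) ≤ |(z - 1).re| := by
        rw [Complex.sub_re, Complex.one_re]
        rw [abs_sub_comm]
        calc (1/2 : ℝ) ≤ 1 - z.re := by linarith
        _ ≤ |1 - z.re| := le_abs_self _
      exact le_trans this (Complex.abs_re_le_norm _)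
    rw [zero_sub, norm_neg]
    nlinarith [norm_nonneg z]
end

section
/- Let A be a unital Banach algebra, a ∈ A with ‖a² − a‖ < 1/4, and let r satisfy 2‖a² − a‖ < r < 1/2. Then for every z on the circles of radius r centered at 0 and at 1, z − a is invertible and the spectrum of a is contained in the union of the open disks of radius r about 0 and 1. -/
theorem key_unit {A : Type*} [NormedRing A] [NormedAlgebra ℂ A] [CompleteSpace A]
    (a : A) (z : ℂ) (hn : ‖a ^ 2 - a‖ < ‖z‖ * ‖z - 1‖) :
    IsUnit (algebraMap ℂ A z - a) := by
  set c : ℂ := z ^ 2 - z with hc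
  have habs : ‖c‖ = ‖z‖ * ‖z - 1‖ := by
    rw [← norm_mul]; congr 1; ring
  have hpos : 0 < ‖c‖ := by
    rw [habs]; exact lt_of_le_of_lt (norm_nonneg _) hn
  have hc0 : c ≠ 0 := by
    intro h0; rw [h0] at hpos; simp at hpos
  have hlt : ‖c⁻¹ • (a ^ 2 - a)‖ < 1 := by
    have hdiv : ‖a ^ 2 - a‖ / ‖c‖ < 1 := (div_lt_one hpos).mpr (habs ▸ hn)
    simpa [norm_smul, norm_inv, div_eq_inv_mul] using hdiv
  have unit1 : IsUnit ((1 : A) - c⁻¹ • (a ^ 2 - a)) := (Units.oneSub _ hlt).isUnit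
  have hfac : algebraMap ℂ A c - (a ^ 2 - a) = c • ((1 : A) - c⁻¹ • (a ^ 2 - a)) := by
    rw [smul_sub, smul_inv_smul₀ hc0, Algebra.algebraMap_eq_smul_one]
  have hu : IsUnit (algebraMap ℂ A c - (a ^ 2 - a)) := by
    rw [hfac, Algebra.smul_def]
    exact ((isUnit_iff_ne_zero.mpr hc0).map (algebraMap ℂ A)).mul unit1
  set m : A := algebraMap ℂ A z with hm
  have hcm : m * a = a * m := Algebra.commutes z a
  have hexp : (m - a) * (m + a - 1) = algebraMap ℂ A c - (a ^ 2 - a) := by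
    have : algebraMap ℂ A c = m * m - m := by
      rw [hc, map_sub, map_pow, pow_two, hm]
    rw [this]
    simp only [sub_mul, mul_sub, mul_add, add_mul, mul_one, one_mul, pow_two]
    rw [hcm]; abel
  have hcomm : Commute (m - a) (m + a - 1) := by
    have h1 : Commute (m - a) m := ((Commute.refl m).sub_left ((show Commute m a from hcm).symm))
    have h2 : Commute (m - a) a := ((show Commute m a from hcm).sub_left (Commute.refl a))
    exact (h1.add_right h2).sub_right (Commute.one_right _)
  have : IsUnit ((m - a) * (m + a - 1)) := by rw [hexp]; exact hu
  exact (hcomm.isUnit_mul_iff.mp this).1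

theorem stmt6 {A : Type*} [NormedRing A] [NormedAlgebra ℂ A] [CompleteSpace A]
    (a : A) (r : ℝ) (h : ‖a ^ 2 - a‖ < 1/4)
    (hr1 : 2 * ‖a ^ 2 - a‖ < r) (hr2 : r < 1/2) :
    (∀ z : ℂ, (‖z‖ = r ∨ ‖z - 1‖ = r) →
        IsUnit (algebraMap ℂ A z - a)) ∧
      spectrum ℂ a ⊆ Metric.ball (0 : ℂ) r ∪ Metric.ball (1 : ℂ) r := by
  have hr0 : 0 < r := lt_of_le_of_lt (by positivity) hr1
  have key : ∀ z : ℂ, r ≤ ‖z‖ → r ≤ ‖z - 1‖ →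
      IsUnit (algebraMap ℂ A z - a) := by
    intro z hz1 hz2
    apply key_unit
    have hsum : (1 : ℝ) ≤ ‖z‖ + ‖z - 1‖ := by
      have h1 : ‖z - (z - 1)‖ ≤ ‖z‖ + ‖z - 1‖ := norm_sub_le _ _
      simpa [] using h1
    have hx0 : 0 ≤ ‖z‖ := norm_nonneg _
    have hy0 : 0 ≤ ‖z - 1‖ := norm_nonneg _
    rcases le_or_gt (1/2 : ℝ) ‖z‖ with hx | hx
    · nlinarith [mul_le_mul hx hz2 (le_of_lt hr0) hx0]
    · have hy : (1/2 : ℝ) ≤ ‖z - 1‖ := by linarith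
      nlinarith [mul_le_mul hz1 hy (by norm_num) hx0]
  constructor
  · intro z hz
    rcases hz with hz | hz
    · exact key z (le_of_eq hz.symm) (by
        have : (1 : ℝ) - ‖z‖ ≤ ‖z - 1‖ := by
          have := norm_sub_norm_le (1 : ℂ) z
          simpa [norm_sub_rev] using this
        linarith [hz ▸ this])
    · exact key z (by
        have : (1 : ℝ) - ‖z - 1‖ ≤ ‖z‖ := by
          have := norm_sub_norm_le (1 : ℂ) (1 - z)
          have h2 : (1 : ℂ) - (1 - z) = z := by ring
          simpa [h2, norm_sub_rev] using this
        linarith [hz ▸ this]) (le_of_eq hz.symm)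
  · intro z hzs
    by_contra hz
    simp only [Set.mem_union, Metric.mem_ball, Complex.dist_eq, not_or, not_lt, sub_zero] at hz
    exact (spectrum.mem_iff.mp hzs) (key z hz.1 hz.2)
end

section
/- Let a be a self-adjoint element of a finite-dimensional C*-algebra (e.g. a self-adjoint n×n complex matrix) and let q = χ_{[1/2,∞)}(a) be the spectral projection via continuous functional calculus. Then for every p ∈ [1, ∞), ‖a − q‖_p ≤ 2‖a² − a‖_p, where ‖·‖_p is the unnormalized Schatten p-norm. -/
open scoped ComplexOrder

/-- The unnormalized Schatten `p`-norm of a square complex matrix,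
`‖M‖_p = (Tr((M^*M)^{p/2}))^{1/p}`, computed via the eigenvalues of `Mᴴ * M`. -/
noncomputable def schattenNorm {n : ℕ} (p : ℝ) (M : Matrix (Fin n) (Fin n) ℂ) : ℝ :=
  (∑ i, (((Matrix.posSemidef_conjTranspose_mul_self M).1).eigenvalues i) ^ (p / 2)) ^ (1 / p)

open Matrix Polynomial

variable {n : ℕ}

/-- Conjugation by a unitary as an `ℝ`-algebra homomorphism. -/
noncomputable def conjAlgHom (U : Matrix.unitaryGroup (Fin n) ℂ) :
    Matrix (Fin n) (Fin n) ℂ →ₐ[ℝ] Matrix (Fin n) (Fin n) ℂ where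
  toFun x := (U : Matrix (Fin n) (Fin n) ℂ) * x * star (U : Matrix (Fin n) (Fin n) ℂ)
  map_one' := by simp [Unitary.coe_mul_star_self]
  map_mul' x y := by
    have h : star (U : Matrix (Fin n) (Fin n) ℂ) * (U : Matrix (Fin n) (Fin n) ℂ) = 1 :=
      Unitary.coe_star_mul_self U
    simp only [mul_assoc]
    rw [← mul_assoc (star (U : Matrix (Fin n) (Fin n) ℂ)) (U : Matrix (Fin n) (Fin n) ℂ), h,
      one_mul]
  map_zero' := by simp
  map_add' x y := by simp [mul_add, add_mul]
  commutes' r := by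
    rw [Algebra.algebraMap_eq_smul_one]
    simp [mul_smul_comm, smul_mul_assoc, Unitary.coe_mul_star_self]

lemma trace_aeval_conj (U : Matrix.unitaryGroup (Fin n) ℂ) (r : Fin n → ℝ) (p : ℝ[X]) :
    (Polynomial.aeval ((U : Matrix (Fin n) (Fin n) ℂ) * Matrix.diagonal (Complex.ofReal ∘ r) *
      star (U : Matrix (Fin n) (Fin n) ℂ)) p).trace = ∑ i, ((p.eval (r i) : ℝ) : ℂ) := by
  have h1 : (U : Matrix (Fin n) (Fin n) ℂ) * Matrix.diagonal (Complex.ofReal ∘ r) *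
      star (U : Matrix (Fin n) (Fin n) ℂ) = conjAlgHom U (Matrix.diagonal (Complex.ofReal ∘ r)) :=
    rfl
  rw [h1, Polynomial.aeval_algHom_apply]
  have h2 : Matrix.diagonal (Complex.ofReal ∘ r) =
      Matrix.diagonalAlgHom ℝ (n := Fin n) (fun i => (r i : ℂ)) := rfl
  rw [h2, Polynomial.aeval_algHom_apply]
  have h3 : ∀ i, (Polynomial.aeval (fun i => (r i : ℂ)) p) i = ((p.eval (r i) : ℝ) : ℂ) := by
    intro i
    have h4 := Polynomial.aeval_algHom_apply (Pi.evalAlgHom ℝ (fun _ : Fin n => ℂ) i)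
      (fun i => (r i : ℂ)) p
    simp only [Pi.evalAlgHom_apply] at h4
    rw [← h4]
    have : ((r i : ℂ)) = algebraMap ℝ ℂ (r i) := rfl
    rw [this, Polynomial.aeval_algebraMap_apply]
    simp [Polynomial.aeval_def, Polynomial.eval_map, Polynomial.eval₂_eq_eval_map]
  have htr : ∀ D : Matrix (Fin n) (Fin n) ℂ, (conjAlgHom U D).trace = D.trace := by
    intro D
    show ((U : Matrix (Fin n) (Fin n) ℂ) * D * star (U : Matrix (Fin n) (Fin n) ℂ)).trace = _
    rw [Matrix.trace_mul_cycle, Unitary.coe_star_mul_self U, one_mul]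
  rw [htr]
  show (Matrix.diagonal (Polynomial.aeval (fun i => (r i : ℂ)) p)).trace = _
  rw [Matrix.trace_diagonal]
  exact Finset.sum_congr rfl fun i _ => h3 i

lemma sum_f_eigenvalues {B : Matrix (Fin n) (Fin n) ℂ} (hB : B.IsHermitian)
    (U : Matrix.unitaryGroup (Fin n) ℂ) (r : Fin n → ℝ)
    (hBU : B = (U : Matrix (Fin n) (Fin n) ℂ) * Matrix.diagonal (Complex.ofReal ∘ r) *
      star (U : Matrix (Fin n) (Fin n) ℂ)) (f : ℝ → ℝ) :
    ∑ i, f (hB.eigenvalues i) = ∑ i, f (r i) := by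
  classical
  set s : Finset ℝ := Finset.image r Finset.univ ∪ Finset.image hB.eigenvalues Finset.univ with hs
  set p : ℝ[X] := Lagrange.interpolate s id f with hpdef
  have hev : ∀ x ∈ s, p.eval x = f x := by
    intro x hx
    exact Lagrange.eval_interpolate_at_node f (Set.injOn_id _) hx
  have h1 := trace_aeval_conj U r p
  have h2 := trace_aeval_conj hB.eigenvectorUnitary hB.eigenvalues p
  rw [← hBU] at h1
  have hsp : B = (hB.eigenvectorUnitary : Matrix (Fin n) (Fin n) ℂ) *
      Matrix.diagonal (Complex.ofReal ∘ hB.eigenvalues) *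
      star (hB.eigenvectorUnitary : Matrix (Fin n) (Fin n) ℂ) := hB.spectral_theorem
  rw [← hsp] at h2
  have h3 : ((∑ i, p.eval (hB.eigenvalues i) : ℝ) : ℂ) = ((∑ i, p.eval (r i) : ℝ) : ℂ) := by
    push_cast
    rw [← h1, ← h2]
  have h4 : (∑ i, p.eval (hB.eigenvalues i) : ℝ) = ∑ i, p.eval (r i) :=
    Complex.ofReal_injective h3
  calc ∑ i, f (hB.eigenvalues i) = ∑ i, p.eval (hB.eigenvalues i) := by
        refine Finset.sum_congr rfl fun i _ => ?_
        rw [hev _ (Finset.mem_union_right _ (Finset.mem_image_of_mem _ (Finset.mem_univ i)))]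
    _ = ∑ i, p.eval (r i) := h4
    _ = ∑ i, f (r i) := by
        refine Finset.sum_congr rfl fun i _ => ?_
        rw [hev _ (Finset.mem_union_left _ (Finset.mem_image_of_mem _ (Finset.mem_univ i)))]


lemma schattenNorm_conj (U : Matrix.unitaryGroup (Fin n) ℂ) (c : Fin n → ℝ) (p : ℝ) :
    schattenNorm p ((U : Matrix (Fin n) (Fin n) ℂ) * Matrix.diagonal (Complex.ofReal ∘ c) *
      star (U : Matrix (Fin n) (Fin n) ℂ)) = (∑ i, (c i ^ 2) ^ (p / 2)) ^ (1 / p) := by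
  set M := (U : Matrix (Fin n) (Fin n) ℂ) * Matrix.diagonal (Complex.ofReal ∘ c) *
      star (U : Matrix (Fin n) (Fin n) ℂ) with hM
  have hMM : Mᴴ * M = (U : Matrix (Fin n) (Fin n) ℂ) *
      Matrix.diagonal (Complex.ofReal ∘ fun i => c i ^ 2) *
      star (U : Matrix (Fin n) (Fin n) ℂ) := by
    have hD : (Matrix.diagonal (Complex.ofReal ∘ c))ᴴ = Matrix.diagonal (Complex.ofReal ∘ c) := by
      rw [Matrix.diagonal_conjTranspose]
      have : star (Complex.ofReal ∘ c) = Complex.ofReal ∘ c := by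
        funext i; simp [Pi.star_apply, Function.comp]
      rw [this]
    have hMH : Mᴴ = (U : Matrix (Fin n) (Fin n) ℂ) * Matrix.diagonal (Complex.ofReal ∘ c) *
        star (U : Matrix (Fin n) (Fin n) ℂ) := by
      rw [hM]
      rw [Matrix.conjTranspose_mul, Matrix.conjTranspose_mul, hD]
      rw [show (star (U : Matrix (Fin n) (Fin n) ℂ))ᴴ = (U : Matrix (Fin n) (Fin n) ℂ) from by
        rw [← Matrix.star_eq_conjTranspose, star_star]]
      rw [show ((U : Matrix (Fin n) (Fin n) ℂ))ᴴ = star (U : Matrix (Fin n) (Fin n) ℂ) from rfl]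
      rw [← mul_assoc]
    rw [hMH, hM]
    have h : star (U : Matrix (Fin n) (Fin n) ℂ) * (U : Matrix (Fin n) (Fin n) ℂ) = 1 :=
      Unitary.coe_star_mul_self U
    calc ((U : Matrix (Fin n) (Fin n) ℂ) * Matrix.diagonal (Complex.ofReal ∘ c) *
          star (U : Matrix (Fin n) (Fin n) ℂ)) *
          ((U : Matrix (Fin n) (Fin n) ℂ) * Matrix.diagonal (Complex.ofReal ∘ c) *
          star (U : Matrix (Fin n) (Fin n) ℂ)) =
        (U : Matrix (Fin n) (Fin n) ℂ) * (Matrix.diagonal (Complex.ofReal ∘ c) *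
          (star (U : Matrix (Fin n) (Fin n) ℂ) * (U : Matrix (Fin n) (Fin n) ℂ)) *
          Matrix.diagonal (Complex.ofReal ∘ c)) * star (U : Matrix (Fin n) (Fin n) ℂ) := by
          simp only [mul_assoc]
      _ = (U : Matrix (Fin n) (Fin n) ℂ) * Matrix.diagonal (Complex.ofReal ∘ fun i => c i ^ 2) *
          star (U : Matrix (Fin n) (Fin n) ℂ) := by
          rw [h, mul_one, Matrix.diagonal_mul_diagonal]
          have hcc : (fun i => (Complex.ofReal ∘ c) i * (Complex.ofReal ∘ c) i) =
              Complex.ofReal ∘ fun i => c i ^ 2 := by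
            funext i; simp [pow_two]
          rw [hcc]
  unfold schattenNorm
  congr 1
  exact sum_f_eigenvalues (Matrix.posSemidef_conjTranspose_mul_self M).1 U _ hMM
    (fun x => x ^ (p / 2))

theorem stmt7 {n : ℕ} (a : Matrix (Fin n) (Fin n) ℂ) (ha : a.IsHermitian)
    (q : Matrix (Fin n) (Fin n) ℂ)
    (hq : q = (ha.eigenvectorUnitary : Matrix (Fin n) (Fin n) ℂ) *
        Matrix.diagonal (fun i => if (1/2 : ℝ) ≤ ha.eigenvalues i then (1 : ℂ) else 0) *
        star (ha.eigenvectorUnitary : Matrix (Fin n) (Fin n) ℂ))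
    (p : ℝ) (hp : 1 ≤ p) :
    schattenNorm p (a - q) ≤ 2 * schattenNorm p (a ^ 2 - a) := by
  classical
  set U := ha.eigenvectorUnitary with hU
  set d := ha.eigenvalues with hd
  set ε : Fin n → ℝ := fun i => if (1/2 : ℝ) ≤ d i then 1 else 0 with hε
  have hsp : a = (U : Matrix (Fin n) (Fin n) ℂ) * Matrix.diagonal (Complex.ofReal ∘ d) *
      star (U : Matrix (Fin n) (Fin n) ℂ) := ha.spectral_theorem
  have key_sub : ∀ c₁ c₂ : Fin n → ℝ,
      (U : Matrix (Fin n) (Fin n) ℂ) * Matrix.diagonal (Complex.ofReal ∘ c₁) *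
        star (U : Matrix (Fin n) (Fin n) ℂ) -
      (U : Matrix (Fin n) (Fin n) ℂ) * Matrix.diagonal (Complex.ofReal ∘ c₂) *
        star (U : Matrix (Fin n) (Fin n) ℂ) =
      (U : Matrix (Fin n) (Fin n) ℂ) * Matrix.diagonal (Complex.ofReal ∘ fun i => c₁ i - c₂ i) *
        star (U : Matrix (Fin n) (Fin n) ℂ) := by
    intro c₁ c₂
    rw [← sub_mul, ← mul_sub, Matrix.diagonal_sub,
      show (fun i => (Complex.ofReal ∘ c₁) i - (Complex.ofReal ∘ c₂) i) =
          Complex.ofReal ∘ fun i => c₁ i - c₂ i from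
        by funext i; simp [Function.comp]]
  have hq' : a - q = (U : Matrix (Fin n) (Fin n) ℂ) *
      Matrix.diagonal (Complex.ofReal ∘ fun i => d i - ε i) *
      star (U : Matrix (Fin n) (Fin n) ℂ) := by
    have hqε : q = (U : Matrix (Fin n) (Fin n) ℂ) * Matrix.diagonal (Complex.ofReal ∘ ε) *
        star (U : Matrix (Fin n) (Fin n) ℂ) := by
      rw [hq, show (fun i => if (1/2 : ℝ) ≤ d i then (1:ℂ) else 0) = Complex.ofReal ∘ ε from by
        funext i; simp [hε, apply_ite Complex.ofReal]]
    rw [hqε]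
    conv_lhs => rw [hsp]
    exact key_sub d ε
  have ha2 : a ^ 2 - a = (U : Matrix (Fin n) (Fin n) ℂ) *
      Matrix.diagonal (Complex.ofReal ∘ fun i => d i ^ 2 - d i) *
      star (U : Matrix (Fin n) (Fin n) ℂ) := by
    have hsq : a ^ 2 = (U : Matrix (Fin n) (Fin n) ℂ) *
        Matrix.diagonal (Complex.ofReal ∘ fun i => d i ^ 2) *
        star (U : Matrix (Fin n) (Fin n) ℂ) := by
      rw [pow_two]
      conv_lhs => rw [hsp]
      have h : star (U : Matrix (Fin n) (Fin n) ℂ) * (U : Matrix (Fin n) (Fin n) ℂ) = 1 :=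
        Unitary.coe_star_mul_self U
      calc ((U : Matrix (Fin n) (Fin n) ℂ) * Matrix.diagonal (Complex.ofReal ∘ d) *
            star (U : Matrix (Fin n) (Fin n) ℂ)) *
            ((U : Matrix (Fin n) (Fin n) ℂ) * Matrix.diagonal (Complex.ofReal ∘ d) *
            star (U : Matrix (Fin n) (Fin n) ℂ)) =
          (U : Matrix (Fin n) (Fin n) ℂ) * (Matrix.diagonal (Complex.ofReal ∘ d) *
            (star (U : Matrix (Fin n) (Fin n) ℂ) * (U : Matrix (Fin n) (Fin n) ℂ)) *
            Matrix.diagonal (Complex.ofReal ∘ d)) * star (U : Matrix (Fin n) (Fin n) ℂ) := by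
            simp only [mul_assoc]
        _ = (U : Matrix (Fin n) (Fin n) ℂ) *
            Matrix.diagonal (Complex.ofReal ∘ fun i => d i ^ 2) *
            star (U : Matrix (Fin n) (Fin n) ℂ) := by
            rw [h, mul_one, Matrix.diagonal_mul_diagonal]
            have hcc : (fun i => (Complex.ofReal ∘ d) i * (Complex.ofReal ∘ d) i) =
                Complex.ofReal ∘ fun i => d i ^ 2 := by
              funext i; simp [pow_two]
            rw [hcc]
    rw [hsq]
    conv_lhs => rw [hsp]
    exact key_sub _ d
  rw [hq', ha2, schattenNorm_conj, schattenNorm_conj]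
  have hp0 : 0 < p := lt_of_lt_of_le one_pos hp
  have sqrp : ∀ x : ℝ, (x ^ 2) ^ (p / 2) = |x| ^ p := by
    intro x
    rw [← sq_abs, ← Real.rpow_natCast |x| 2, ← Real.rpow_mul (abs_nonneg x),
      show ((2:ℕ):ℝ) * (p/2) = p by push_cast; ring]
  have habs : ∀ i, |d i - ε i| ≤ 2 * |d i ^ 2 - d i| := by
    intro i
    have hfac : d i ^ 2 - d i = d i * (d i - 1) := by ring
    rw [hfac, abs_mul]
    rcases le_or_gt (1/2 : ℝ) (d i) with h | h
    · have hε1 : ε i = 1 := if_pos h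
      rw [hε1, abs_of_nonneg (show (0:ℝ) ≤ d i by linarith)]
      nlinarith [abs_nonneg (d i - 1)]
    · have hε0 : ε i = 0 := if_neg (not_le.mpr h)
      rw [hε0, sub_zero, abs_of_nonpos (show d i - 1 ≤ 0 by linarith), neg_sub]
      nlinarith [abs_nonneg (d i)]
  have key : ∀ i, ((d i - ε i) ^ 2) ^ (p / 2) ≤ 2 ^ p * ((d i ^ 2 - d i) ^ 2) ^ (p / 2) := by
    intro i
    rw [sqrp, sqrp, ← Real.mul_rpow (by norm_num) (abs_nonneg _)]
    exact Real.rpow_le_rpow (abs_nonneg _) (habs i) (le_of_lt hp0)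
  have hsum_nonneg : (0:ℝ) ≤ ∑ i, ((d i ^ 2 - d i) ^ 2) ^ (p / 2) :=
    Finset.sum_nonneg fun i _ => Real.rpow_nonneg (sq_nonneg _) _
  have hsum : ∑ i, ((d i - ε i) ^ 2) ^ (p / 2) ≤
      2 ^ p * ∑ i, ((d i ^ 2 - d i) ^ 2) ^ (p / 2) := by
    rw [Finset.mul_sum]
    exact Finset.sum_le_sum fun i _ => key i
  have h1 : (∑ i, ((d i - ε i) ^ 2) ^ (p / 2)) ^ (1 / p) ≤
      (2 ^ p * ∑ i, ((d i ^ 2 - d i) ^ 2) ^ (p / 2)) ^ (1 / p) :=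
    Real.rpow_le_rpow (Finset.sum_nonneg fun i _ => Real.rpow_nonneg (sq_nonneg _) _) hsum
      (by positivity)
  refine h1.trans_eq ?_
  rw [Real.mul_rpow (by positivity) hsum_nonneg, ← Real.rpow_mul (by norm_num : (0:ℝ) ≤ 2),
    mul_one_div_cancel (ne_of_gt hp0), Real.rpow_one]
end

section
/- Let u be a unitary n×n complex matrix, let R = {z ∈ ℂ : Re(z) > 0}, and let v = 2χ_R(u) − 1 be obtained by continuous functional calculus. Then v is a self-adjoint unitary (v² = 1, v* = v) and for every p ∈ [1,∞), ‖u − v‖_p ≤ ‖u² − 1‖_p in the unnormalized Schatten p-norm. -/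
open scoped ComplexOrder

open Matrix Polynomial in
lemma charpoly_unitary_conj {n : ℕ} (W : Matrix.unitaryGroup (Fin n) ℂ)
    (A : Matrix (Fin n) (Fin n) ℂ) :
    ((W : Matrix (Fin n) (Fin n) ℂ) * A * star (W : Matrix (Fin n) (Fin n) ℂ)).charpoly
      = A.charpoly := by
  set Wm : Matrix (Fin n) (Fin n) ℂ := (W : Matrix (Fin n) (Fin n) ℂ)
  have h1 : star Wm * Wm = 1 := W.2.1
  have h2 : Wm * star Wm = 1 := W.2.2
  let f : Matrix (Fin n) (Fin n) ℂ →+* Matrix (Fin n) (Fin n) ℂ[X] :=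
    (RingHom.mapMatrix (C : ℂ →+* ℂ[X]))
  have key : charmatrix (Wm * A * star Wm) = f Wm * charmatrix A * f (star Wm) := by
    have hc : (Matrix.scalar (Fin n) (X : ℂ[X])) = f Wm * (Matrix.scalar (Fin n) (X : ℂ[X])) * f (star Wm) := by
      rw [mul_assoc, (Matrix.scalar_commute (X : ℂ[X]) (fun r => Commute.all _ _) (f (star Wm))).eq,
        ← mul_assoc, ← _root_.map_mul f, h2, _root_.map_one f, one_mul]
    rw [charmatrix, charmatrix]
    calc Matrix.scalar (Fin n) (X : ℂ[X]) - (C : ℂ →+* ℂ[X]).mapMatrix (Wm * A * star Wm)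
        = f Wm * (Matrix.scalar (Fin n) (X : ℂ[X])) * f (star Wm) - f Wm * (C : ℂ →+* ℂ[X]).mapMatrix A * f (star Wm) := by
          rw [← hc]; congr 1; simp only [f, _root_.map_mul]
      _ = f Wm * ((Matrix.scalar (Fin n) (X : ℂ[X])) - (C : ℂ →+* ℂ[X]).mapMatrix A) * f (star Wm) := by
          noncomm_ring
  rw [Matrix.charpoly, key, Matrix.charpoly, det_mul, det_mul]
  have : (f Wm).det * (f (star Wm)).det = 1 := by
    rw [← det_mul, ← _root_.map_mul f, h2, _root_.map_one f, det_one]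
  calc (f Wm).det * (charmatrix A).det * (f (star Wm)).det
      = (f Wm).det * (f (star Wm)).det * (charmatrix A).det := by ring
    _ = (charmatrix A).det := by rw [this, one_mul]

open Matrix Polynomial in
lemma charpoly_diagonal' {n : ℕ} (d : Fin n → ℂ) :
    (Matrix.diagonal d).charpoly = ∏ i, (X - C (d i)) := by
  rw [Matrix.charpoly]
  have : charmatrix (Matrix.diagonal d) = Matrix.diagonal (fun i => X - C (d i)) := by
    ext i j
    by_cases h : i = j
    · subst h; simp
    · rw [charmatrix_apply_ne _ _ _ h, Matrix.diagonal_apply_ne _ h, Matrix.diagonal_apply_ne _ h]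
      simp
  rw [this, det_diagonal]

open Matrix Polynomial in
lemma multiset_eigs_eq {n : ℕ} (W₁ W₂ : Matrix.unitaryGroup (Fin n) ℂ)
    (d₁ d₂ : Fin n → ℂ)
    (h : (W₁ : Matrix (Fin n) (Fin n) ℂ) * Matrix.diagonal d₁ * star (W₁ : Matrix (Fin n) (Fin n) ℂ)
       = (W₂ : Matrix (Fin n) (Fin n) ℂ) * Matrix.diagonal d₂ * star (W₂ : Matrix (Fin n) (Fin n) ℂ)) :
    Multiset.map d₁ Finset.univ.val = Multiset.map d₂ Finset.univ.val := by
  have h1 := charpoly_unitary_conj W₁ (Matrix.diagonal d₁)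
  have h2 := charpoly_unitary_conj W₂ (Matrix.diagonal d₂)
  have hcp : (Matrix.diagonal d₁).charpoly = (Matrix.diagonal d₂).charpoly := by
    rw [← h1, ← h2, h]
  rw [charpoly_diagonal', charpoly_diagonal'] at hcp
  have r1 : (∏ i, (X - C (d₁ i))).roots = Multiset.map d₁ Finset.univ.val := by
    rw [show (∏ i, (X - C (d₁ i))) = ((Multiset.map d₁ Finset.univ.val).map fun a => X - C a).prod by
      rw [Multiset.map_map]; rfl, Polynomial.roots_multiset_prod_X_sub_C]
  have r2 : (∏ i, (X - C (d₂ i))).roots = Multiset.map d₂ Finset.univ.val := by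
    rw [show (∏ i, (X - C (d₂ i))) = ((Multiset.map d₂ Finset.univ.val).map fun a => X - C a).prod by
      rw [Multiset.map_map]; rfl, Polynomial.roots_multiset_prod_X_sub_C]
  rw [← r1, ← r2, hcp]

open Matrix in
lemma sum_g_eig {n : ℕ} {A : Matrix (Fin n) (Fin n) ℂ} (hA : A.IsHermitian)
    (W : Matrix.unitaryGroup (Fin n) ℂ) (d : Fin n → ℂ)
    (h : A = (W : Matrix (Fin n) (Fin n) ℂ) * Matrix.diagonal d *
        star (W : Matrix (Fin n) (Fin n) ℂ)) (g : ℂ → ℝ) :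
    ∑ i, g (hA.eigenvalues i : ℂ) = ∑ i, g (d i) := by
  have hs := hA.spectral_theorem
  have hm := multiset_eigs_eq (hA.eigenvectorUnitary) W
    (fun i => (hA.eigenvalues i : ℂ)) d (by rw [show (fun i => (hA.eigenvalues i : ℂ)) = RCLike.ofReal ∘ hA.eigenvalues from rfl]; exact hs.symm.trans h)
  have := congrArg (fun m => (Multiset.map g m).sum) hm
  simpa [Multiset.map_map, Finset.sum, Function.comp_def] using this

theorem stmt8 {n : ℕ} (u v : Matrix (Fin n) (Fin n) ℂ)
    (hu : u ∈ Matrix.unitaryGroup (Fin n) ℂ)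
    (U : Matrix.unitaryGroup (Fin n) ℂ) (lam : Fin n → ℂ)
    (hdiag : u = (U : Matrix (Fin n) (Fin n) ℂ) * Matrix.diagonal lam *
        star (U : Matrix (Fin n) (Fin n) ℂ))
    (hv : v = (U : Matrix (Fin n) (Fin n) ℂ) *
        Matrix.diagonal (fun i => 2 * (if (0 : ℝ) < (lam i).re then (1 : ℂ) else 0) - 1) *
        star (U : Matrix (Fin n) (Fin n) ℂ)) :
    v * v = 1 ∧ v.conjTranspose = v ∧
      ∀ p : ℝ, 1 ≤ p → schattenNorm p (u - v) ≤ schattenNorm p (u ^ 2 - 1) := by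
  set Um : Matrix (Fin n) (Fin n) ℂ := (U : Matrix (Fin n) (Fin n) ℂ) with hUm
  have hsU : star Um * Um = 1 := U.2.1
  have hUs : Um * star Um = 1 := U.2.2
  set μ : Fin n → ℂ := fun i => 2 * (if (0 : ℝ) < (lam i).re then (1 : ℂ) else 0) - 1 with hμ
  have hμval : ∀ i, μ i = 1 ∨ μ i = -1 := by
    intro i; by_cases h : (0:ℝ) < (lam i).re
    · left; simp only [hμ, if_pos h]; norm_num
    · right; simp only [hμ, if_neg h]; norm_num
  -- generic conjugation multiplication
  have conj_mul : ∀ a b : Fin n → ℂ,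
      (Um * Matrix.diagonal a * star Um) * (Um * Matrix.diagonal b * star Um)
        = Um * Matrix.diagonal (fun i => a i * b i) * star Um := by
    intro a b
    calc (Um * Matrix.diagonal a * star Um) * (Um * Matrix.diagonal b * star Um)
        = Um * Matrix.diagonal a * (star Um * Um) * (Matrix.diagonal b * star Um) := by
          noncomm_ring
      _ = Um * (Matrix.diagonal a * Matrix.diagonal b) * star Um := by
          rw [hsU, mul_one]; noncomm_ring
      _ = _ := by rw [Matrix.diagonal_mul_diagonal]
  -- conjTranspose of conjugated diagonal
  have conj_ct : ∀ a : Fin n → ℂ,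
      (Um * Matrix.diagonal a * star Um).conjTranspose
        = Um * Matrix.diagonal (fun i => star (a i)) * star Um := by
    intro a
    simp only [Matrix.star_eq_conjTranspose, Matrix.conjTranspose_mul,
      Matrix.conjTranspose_conjTranspose, Matrix.diagonal_conjTranspose, mul_assoc]
    rfl
  have hvv : v * v = 1 := by
    rw [hv, conj_mul]
    have : (fun i => μ i * μ i) = fun _ => (1:ℂ) := by
      funext i; rcases hμval i with h | h <;> rw [h] <;> ring
    rw [this, Matrix.diagonal_one, mul_one, hUs]
  have hμstar : ∀ i, star (μ i) = μ i := by
    intro i; rcases hμval i with h | h <;> rw [h] <;> simp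
  have hvct : v.conjTranspose = v := by
    rw [hv, conj_ct]
    simp only [hμstar]
  refine ⟨hvv, hvct, ?_⟩
  -- eigenvalues of u have modulus one
  have hlam : ∀ i, Complex.normSq (lam i) = 1 := by
    have hD : star Um * u * Um = Matrix.diagonal lam := by
      rw [hdiag]
      calc star Um * (Um * Matrix.diagonal lam * star Um) * Um
          = (star Um * Um) * Matrix.diagonal lam * (star Um * Um) := by noncomm_ring
        _ = Matrix.diagonal lam := by rw [hsU, one_mul, mul_one]
    have hsuu : star u * u = 1 := hu.1
    have hDD : star (Matrix.diagonal lam) * Matrix.diagonal lam = 1 := by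
      rw [← hD]
      calc star (star Um * u * Um) * (star Um * u * Um)
          = star Um * star u * (Um * star Um) * u * Um := by
            simp only [star_mul, star_star]; noncomm_ring
        _ = star Um * (star u * u) * Um := by rw [hUs, mul_one]; noncomm_ring
        _ = 1 := by rw [hsuu, mul_one, hsU]
    intro i
    rw [Matrix.star_eq_conjTranspose, Matrix.diagonal_conjTranspose,
      Matrix.diagonal_mul_diagonal] at hDD
    have h0 := congrFun (congrFun hDD i) i
    simp only [Matrix.diagonal_apply_eq, Matrix.one_apply_eq, Pi.star_apply,
      Pi.mul_apply] at h0
    have h1 : ((Complex.normSq (lam i) : ℂ)) = 1 := by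
      rw [Complex.normSq_eq_conj_mul_self]; exact h0
    exact_mod_cast h1
  -- set up the two difference matrices
  set c : Fin n → ℂ := fun i => lam i - μ i with hc
  set e : Fin n → ℂ := fun i => lam i * lam i - 1 with he
  have hud : u - v = Um * Matrix.diagonal c * star Um := by
    have h2 : Matrix.diagonal c = Matrix.diagonal lam - Matrix.diagonal μ := by
      rw [← Matrix.diagonal_sub]
    rw [h2, hdiag, hv]; noncomm_ring
  have hu2 : u ^ 2 - 1 = Um * Matrix.diagonal e * star Um := by
    have h1 : u ^ 2 = Um * Matrix.diagonal (fun i => lam i * lam i) * star Um := by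
      rw [pow_two, hdiag]; exact conj_mul lam lam
    have h2 : Matrix.diagonal e = Matrix.diagonal (fun i => lam i * lam i) - 1 := by
      rw [← Matrix.diagonal_one, ← Matrix.diagonal_sub]
    rw [h2, Matrix.mul_sub, Matrix.sub_mul, mul_one, hUs, ← h1]
  -- pointwise inequality
  have hpt : ∀ i, Complex.normSq (c i) ≤ Complex.normSq (e i) := by
    intro i
    have h1 := hlam i
    set x := (lam i).re with hx
    set y := (lam i).im with hy
    have hxy : x ^ 2 + y ^ 2 = 1 := by
      rw [← h1]; simp [Complex.normSq_apply]; ring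
    have hce : Complex.normSq (e i) = (x * x - y * y - 1) ^ 2 + (x * y + y * x) ^ 2 := by
      simp [he, Complex.normSq_apply, Complex.mul_re, Complex.mul_im, Complex.sub_re,
        Complex.sub_im, Complex.one_re, Complex.one_im]
      ring
    by_cases h : (0:ℝ) < x
    · have hμi : μ i = 1 := by
        simp only [hμ]; rw [if_pos (hx ▸ h)]; norm_num
      have hcc : Complex.normSq (c i) = (x - 1) ^ 2 + y ^ 2 := by
        simp [hc, hμi, Complex.normSq_apply, Complex.sub_re, Complex.sub_im, Complex.one_re,
          Complex.one_im]
        ring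
      rw [hcc, hce]
      nlinarith [sq_nonneg y, sq_nonneg (x - 1), sq_nonneg (x + 1), sq_nonneg x]
    · have hμi : μ i = -1 := by
        simp only [hμ]; rw [if_neg (hx ▸ h)]; norm_num
      have hcc : Complex.normSq (c i) = (x + 1) ^ 2 + y ^ 2 := by
        simp [hc, hμi, Complex.normSq_apply, Complex.sub_re, Complex.sub_im, Complex.one_re,
          Complex.one_im, Complex.add_re, Complex.add_im, Complex.neg_re, Complex.neg_im]
        ring
      push_neg at h
      rw [hcc, hce]
      nlinarith [sq_nonneg y, sq_nonneg (x - 1), sq_nonneg (x + 1), sq_nonneg x]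
  intro p hp
  -- compute both Schatten sums
  have key : ∀ (M : Matrix (Fin n) (Fin n) ℂ) (d : Fin n → ℂ),
      M = Um * Matrix.diagonal d * star Um →
      ∑ i, (((Matrix.posSemidef_conjTranspose_mul_self M).1).eigenvalues i) ^ (p / 2)
        = ∑ i, (Complex.normSq (d i)) ^ (p / 2) := by
    intro M d hM
    have hMM : M.conjTranspose * M
        = Um * Matrix.diagonal (fun i => star (d i) * d i) * star Um := by
      rw [hM, conj_ct, conj_mul]
    have hsum := sum_g_eig ((Matrix.posSemidef_conjTranspose_mul_self M).1) U
      (fun i => star (d i) * d i) hMM (fun z => z.re ^ (p / 2))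
    simp only [Complex.ofReal_re] at hsum
    rw [hsum]
    congr 1
    funext i
    congr 1
    rw [Complex.star_def, ← Complex.normSq_eq_conj_mul_self, Complex.ofReal_re]
  rw [schattenNorm, schattenNorm, key (u - v) c hud, key (u ^ 2 - 1) e hu2]
  apply Real.rpow_le_rpow
  · exact Finset.sum_nonneg fun i _ => Real.rpow_nonneg (Complex.normSq_nonneg _) _
  · exact Finset.sum_le_sum fun i _ =>
      Real.rpow_le_rpow (Complex.normSq_nonneg _) (hpt i) (by linarith)
  · positivity
end

section
/- Let b_1, …, b_N be n×n complex matrices. Then sqrt(Σ_{i=1}^N |Tr(b_i)|²) ≤ sqrt(N) · Tr((Σ_{i=1}^N b_i* b_i)^{1/2}). -/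
open scoped ComplexOrder

/-- The positive semidefinite square root, as Mathlib defined it in December 2024 (since removed). -/
noncomputable def Matrix.PosSemidef.sqrt {n 𝕜 : Type*} [Fintype n] [DecidableEq n] [RCLike 𝕜]
    {A : Matrix n n 𝕜} (hA : A.PosSemidef) : Matrix n n 𝕜 :=
  (hA.1.eigenvectorUnitary : Matrix n n 𝕜) * Matrix.diagonal ((↑) ∘ (Real.sqrt ·) ∘ hA.1.eigenvalues) *
    (star hA.1.eigenvectorUnitary : Matrix n n 𝕜)

open Matrix in
lemma single_quad {n : ℕ} (M : Matrix (Fin n) (Fin n) ℂ) (k : Fin n) :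
    dotProduct (star (Pi.single k (1:ℂ))) (M *ᵥ Pi.single k 1) = M k k := by
  simp [Matrix.mulVec_single, dotProduct, Pi.single_apply, apply_ite (starRingEnd ℂ)]

open Matrix in
lemma key_diag {n : ℕ} {S : Matrix (Fin n) (Fin n) ℂ} (hS : S.PosSemidef)
    {b : Matrix (Fin n) (Fin n) ℂ} (h : (S - bᴴ * b).PosSemidef) :
    ‖b.trace‖ ≤ ∑ k, Real.sqrt (hS.1.eigenvalues k) := by
  set U : Matrix (Fin n) (Fin n) ℂ := (hS.1.eigenvectorUnitary : Matrix (Fin n) (Fin n) ℂ)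
    with hUdef
  have hU2 : U * Uᴴ = 1 := by
    simpa [star_eq_conjTranspose] using (mem_unitaryGroup_iff.mp hS.1.eigenvectorUnitary.2)
  set c : Matrix (Fin n) (Fin n) ℂ := Uᴴ * b * U with hc
  have htr : c.trace = b.trace := by
    rw [hc, Matrix.trace_mul_comm, ← Matrix.mul_assoc, hU2, Matrix.one_mul]
  have hdiag : Uᴴ * S * U = Matrix.diagonal (RCLike.ofReal ∘ hS.1.eigenvalues) := by
    simpa [star_eq_conjTranspose] using hS.1.conjStarAlgAut_star_eigenvectorUnitary
  have hcc : cᴴ * c = Uᴴ * (bᴴ * b) * U := by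
    simp only [hc, conjTranspose_mul, conjTranspose_conjTranspose, Matrix.mul_assoc]
    rw [← Matrix.mul_assoc U Uᴴ, hU2, Matrix.one_mul]
  have hPSD : (Matrix.diagonal (RCLike.ofReal ∘ hS.1.eigenvalues) - cᴴ * c).PosSemidef := by
    have h2 := h.conjTranspose_mul_mul_same U
    have heq : Uᴴ * (S - bᴴ * b) * U
        = Matrix.diagonal (RCLike.ofReal ∘ hS.1.eigenvalues) - cᴴ * c := by
      rw [Matrix.mul_sub, Matrix.sub_mul, hdiag, hcc]
    rwa [heq] at h2
  have hentry : ∀ k, ‖c k k‖ ≤ Real.sqrt (hS.1.eigenvalues k) := by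
    intro k
    have h0 := hPSD.dotProduct_mulVec_nonneg (Pi.single k 1)
    rw [single_quad] at h0
    rw [Matrix.sub_apply, Matrix.diagonal_apply_eq] at h0
    have hre : ((cᴴ * c) k k).re ≤ hS.1.eigenvalues k := by
      have := (Complex.le_def.mp h0).1
      simpa [Function.comp] using this
    have hsum : ((cᴴ * c) k k).re = ∑ j, ‖c j k‖ ^ 2 := by
      rw [Matrix.mul_apply, Complex.re_sum]
      refine Finset.sum_congr rfl fun j _ => ?_
      rw [Matrix.conjTranspose_apply]
      simp [Complex.star_def, mul_comm, Complex.mul_conj, Complex.normSq_eq_norm_sq,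
        ← Complex.ofReal_pow, Complex.ofReal_re]
    have hone : ‖c k k‖ ^ 2 ≤ hS.1.eigenvalues k := by
      refine le_trans ?_ (hsum ▸ hre)
      exact Finset.single_le_sum (f := fun j => ‖c j k‖ ^ 2)
        (fun j _ => by positivity) (Finset.mem_univ k)
    calc ‖c k k‖ = Real.sqrt (‖c k k‖ ^ 2) :=
          (Real.sqrt_sq (norm_nonneg _)).symm
      _ ≤ Real.sqrt (hS.1.eigenvalues k) := Real.sqrt_le_sqrt hone
  calc ‖b.trace‖ = ‖∑ k, c k k‖ := by rw [← htr]; rfl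
    _ ≤ ∑ k, ‖c k k‖ := norm_sum_le _ _
    _ ≤ ∑ k, Real.sqrt (hS.1.eigenvalues k) := Finset.sum_le_sum fun k _ => hentry k

open Matrix in
lemma sqrt_trace_re {n : ℕ} {S : Matrix (Fin n) (Fin n) ℂ} (hS : S.PosSemidef) :
    hS.sqrt.trace.re = ∑ k, Real.sqrt (hS.1.eigenvalues k) := by
  have : hS.sqrt.trace = ((∑ k, Real.sqrt (hS.1.eigenvalues k) : ℝ) : ℂ) := by
    rw [Matrix.PosSemidef.sqrt, Matrix.trace_mul_cycle]
    have hU1 : (star (hS.1.eigenvectorUnitary : Matrix (Fin n) (Fin n) ℂ)) *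
        (hS.1.eigenvectorUnitary : Matrix (Fin n) (Fin n) ℂ) = 1 :=
      mem_unitaryGroup_iff'.mp hS.1.eigenvectorUnitary.2
    rw [hU1, Matrix.one_mul, Matrix.trace_diagonal]
    push_cast
    rfl
  rw [this, Complex.ofReal_re]

theorem stmt13 {n N : ℕ} (b : Fin N → Matrix (Fin n) (Fin n) ℂ)
    (hS : (∑ i, (b i).conjTranspose * b i).PosSemidef) :
    Real.sqrt (∑ i, ‖(b i).trace‖ ^ 2) ≤
      Real.sqrt N * (hS.sqrt).trace.re := by
  set T : ℝ := (hS.sqrt).trace.re with hT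
  have hTval : T = ∑ k, Real.sqrt (hS.1.eigenvalues k) := sqrt_trace_re hS
  have hT0 : 0 ≤ T := by
    rw [hTval]; exact Finset.sum_nonneg fun k _ => Real.sqrt_nonneg _
  have hsumPSD : ∀ s : Finset (Fin N), (∑ j ∈ s, (b j).conjTranspose * b j).PosSemidef :=
    fun s => Finset.sum_induction _ _ (fun _ _ => Matrix.PosSemidef.add)
      Matrix.PosSemidef.zero (fun j _ => Matrix.posSemidef_conjTranspose_mul_self _)
  have hkey : ∀ i, ‖(b i).trace‖ ≤ T := by
    intro i
    have hdiff : ((∑ j, (b j).conjTranspose * b j) - (b i).conjTranspose * b i).PosSemidef := by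
      have heq : (∑ j, (b j).conjTranspose * b j) - (b i).conjTranspose * b i
          = ∑ j ∈ Finset.univ.erase i, (b j).conjTranspose * b j :=
        sub_eq_iff_eq_add.mpr (Finset.sum_erase_add _ _ (Finset.mem_univ i)).symm
      rw [heq]; exact hsumPSD _
    rw [hTval]
    exact key_diag hS hdiff
  have hsq : (∑ i, ‖(b i).trace‖ ^ 2) ≤ N * T ^ 2 := by
    calc (∑ i, ‖(b i).trace‖ ^ 2) ≤ ∑ _i : Fin N, T ^ 2 :=
          Finset.sum_le_sum fun i _ => pow_le_pow_left₀ (norm_nonneg _) (hkey i) 2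
      _ = N * T ^ 2 := by simp [mul_comm]
  calc Real.sqrt (∑ i, ‖(b i).trace‖ ^ 2) ≤ Real.sqrt (N * T ^ 2) :=
        Real.sqrt_le_sqrt hsq
    _ = Real.sqrt N * T := by
        rw [Real.sqrt_mul (Nat.cast_nonneg N), Real.sqrt_sq hT0]
end
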